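/- Generalized Fortuin–Kasteleyn representation: for a finite list L = (g_e)_{e∈E} in a finitely generated abelian group G, and H ≅ ⊕_{i=1}^k ℤ/q_iℤ a finite abelian group of order q = q_1···q_k, Σ_{φ∈Hom(G,H)} Π_{e∈E}(1 + v_e·[φ(g_e)=0]) = q^{rk(G)} Σ_{A⊆E} q^{-rk(A)} (Π_{i=1}^k m(A)/|q_i G_A|) Π_{e∈A} v_e. -/

import Mathlib

variable {α : Type*} [DecidableEq α] {G : Type*} [AddCommGroup G]

/-- The subgroup `⟨L_A⟩` generated by the sublist of the list `g` indexed by `A`. -/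
def listSub (g : α → G) (A : Finset α) : AddSubgroup G :=
  AddSubgroup.closure (g '' ↑A)

/-- The (free) rank `rk(A)` of `⟨L_A⟩`. -/
noncomputable def listRk (g : α → G) (A : Finset α) : ℕ :=
  Module.finrank ℤ (listSub g A)

/-- `G_A`: the torsion subgroup of `G/⟨L_A⟩`. -/
def listTorsion (g : α → G) (A : Finset α) : AddSubgroup (G ⧸ listSub g A) :=
  AddCommGroup.torsion (G ⧸ listSub g A)

/-- The multiplicity `m(A) = |G_A|`. -/
noncomputable def listMult (g : α → G) (A : Finset α) : ℕ :=
  Nat.card (listTorsion g A)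

/-- The subgroup `qH = {q·h : h ∈ H}` of an abelian group `H`. -/
def nsmulSub (q : ℕ) (H : Type*) [AddCommGroup H] : AddSubgroup H :=
  AddMonoidHom.range
    { toFun := fun h : H => q • h
      map_zero' := smul_zero q
      map_add' := fun a b => smul_add q a b }

section AuxiliaryLemmas

open DirectSum

variable {M N : Type*} [AddCommGroup M] [AddCommGroup N]


def nsmulHom (q : ℕ) (H : Type*) [AddCommGroup H] : H →+ H :=
  { toFun := fun h : H => q • h
    map_zero' := smul_zero q
    map_add' := fun a b => smul_add q a b }

lemma nsmulSub_eq_range (q : ℕ) (H : Type*) [AddCommGroup H] :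
    nsmulSub q H = (nsmulHom q H).range := rfl

lemma mem_nsmulSub {q : ℕ} {x : M} : x ∈ nsmulSub q M ↔ ∃ h, q • h = x := by
  rw [nsmulSub_eq_range]
  exact AddMonoidHom.mem_range

lemma card_nsmulSub_congr (q : ℕ) (e : M ≃+ N) :
    Nat.card (nsmulSub q M) = Nat.card (nsmulSub q N) := by
  refine Nat.card_congr ⟨fun x => ⟨e x, ?_⟩, fun y => ⟨e.symm y, ?_⟩, ?_, ?_⟩
  · obtain ⟨h, hh⟩ := mem_nsmulSub.mp x.2
    exact mem_nsmulSub.mpr ⟨e h, by rw [← hh, map_nsmul]⟩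
  · obtain ⟨h, hh⟩ := mem_nsmulSub.mp y.2
    exact mem_nsmulSub.mpr ⟨e.symm h, by rw [← hh, map_nsmul]⟩
  · intro x; ext : 1; simp
  · intro y; ext : 1; simp

def torsionCongr (e : M ≃+ N) : AddCommGroup.torsion M ≃+ AddCommGroup.torsion N where
  toFun x := ⟨e x, e.toAddMonoidHom.isOfFinAddOrder x.2⟩
  invFun y := ⟨e.symm y, e.symm.toAddMonoidHom.isOfFinAddOrder y.2⟩
  left_inv x := by ext : 1; simp
  right_inv y := by ext : 1; simp
  map_add' x y := by ext : 1; simp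

def homCongr (e : M ≃+ N) (C : Type*) [AddCommMonoid C] : (M →+ C) ≃ (N →+ C) where
  toFun φ := φ.comp e.symm.toAddMonoidHom
  invFun ψ := ψ.comp e.toAddMonoidHom
  left_inv φ := by ext x; simp
  right_inv ψ := by ext x; simp

def homPiEquiv (ι : Type*) [Fintype ι] [DecidableEq ι] (M : ι → Type*)
    [∀ i, AddCommMonoid (M i)] (C : Type*) [AddCommMonoid C] :
    ((∀ i, M i) →+ C) ≃ ∀ i, (M i →+ C) where
  toFun ψ i := ψ.comp (AddMonoidHom.single M i)
  invFun f := (∑ i : ι, (f i).comp (Pi.evalAddMonoidHom M i) : (∀ i, M i) →+ C)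
  left_inv ψ := by
    refine AddMonoidHom.ext fun x => ?_
    have h : ψ x = ψ (∑ i : ι, Pi.single i (x i)) := by rw [Finset.univ_sum_single x]
    simp only [AddMonoidHom.finset_sum_apply, AddMonoidHom.coe_comp, Function.comp_apply,
      Pi.evalAddMonoidHom_apply, AddMonoidHom.single_apply, h, map_sum]
  right_inv f := by
    refine funext fun i => AddMonoidHom.ext fun y => ?_
    simp only [AddMonoidHom.coe_comp, Function.comp_apply, AddMonoidHom.single_apply,
      AddMonoidHom.finset_sum_apply, Pi.evalAddMonoidHom_apply]
    rw [Fintype.sum_eq_single i]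
    · rw [Pi.single_eq_same]
    · intro j hj
      rw [Pi.single_eq_of_ne hj, map_zero]

def homProdEquiv (A B C : Type*) [AddCommMonoid A] [AddCommMonoid B] [AddCommMonoid C] :
    ((A × B) →+ C) ≃ ((A →+ C) × (B →+ C)) where
  toFun φ := (φ.comp (AddMonoidHom.inl A B), φ.comp (AddMonoidHom.inr A B))
  invFun p := p.1.coprod p.2
  left_inv φ := by
    ext ⟨a, b⟩
    simp only [AddMonoidHom.coprod_apply, AddMonoidHom.coe_comp, Function.comp_apply,
      AddMonoidHom.inl_apply, AddMonoidHom.inr_apply]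
    rw [← map_add]
    congr 1
    simp
  right_inv p := by
    refine Prod.ext ?_ ?_ <;> (ext x; simp)

def homIntoPiEquiv (Q : Type*) [AddCommMonoid Q] (ι : Type*) (M : ι → Type*)
    [∀ i, AddCommMonoid (M i)] :
    (Q →+ ∀ i, M i) ≃ ∀ i, (Q →+ M i) where
  toFun φ i := (Pi.evalAddMonoidHom M i).comp φ
  invFun f :=
    { toFun := fun x i => f i x
      map_zero' := by ext i; simp
      map_add' := fun a b => by ext i; simp }
  left_inv φ := by ext x; rfl
  right_inv f := by ext i x; rfl

def zmodHomEquiv (n : ℕ) (A : Type*) [AddCommGroup A] :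
    (ZMod n →+ A) ≃ {a : A // n • a = 0} :=
  (ZMod.lift n).symm.trans <| Equiv.subtypeEquiv (zmultiplesHom A).symm <| by
    intro f
    rw [zmultiplesHom_symm_apply]
    constructor
    · intro h
      rw [← map_nsmul, nsmul_eq_mul, mul_one] at *
      exact h
    · intro h
      rw [← map_nsmul, nsmul_eq_mul, mul_one] at h
      exact h

lemma card_zmodHom (n : ℕ) (A : Type*) [AddCommGroup A] :
    Nat.card (ZMod n →+ A) = Nat.card {a : A // n • a = 0} :=
  Nat.card_congr (zmodHomEquiv n A)

lemma card_smulKer_mul (q : ℕ) (H : Type*) [AddCommGroup H] [Finite H] :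
    Nat.card {a : H // q • a = 0} * Nat.card (nsmulSub q H) = Nat.card H := by
  have h1 := AddSubgroup.card_eq_card_quotient_mul_card_addSubgroup (nsmulHom q H).ker
  have h2 : Nat.card (H ⧸ (nsmulHom q H).ker) = Nat.card (nsmulSub q H) := by
    rw [nsmulSub_eq_range]
    exact Nat.card_congr (QuotientAddGroup.quotientKerEquivRange _).toEquiv
  have h3 : Nat.card ((nsmulHom q H).ker) = Nat.card {a : H // q • a = 0} :=
    Nat.card_congr (Equiv.subtypeEquivRight fun x => by
      simp [AddMonoidHom.mem_ker, nsmulHom])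
  rw [← h2, ← h3, mul_comm]
  exact h1.symm

lemma card_nsmulSub_zmod (d q : ℕ) (hq : q ≠ 0) :
    Nat.card (nsmulSub d (ZMod q)) = q / q.gcd d := by
  have h : nsmulSub d (ZMod q) = AddSubgroup.zmultiples (d : ZMod q) := by
    ext x
    rw [mem_nsmulSub, AddSubgroup.mem_zmultiples_iff]
    constructor
    · rintro ⟨h, rfl⟩
      obtain ⟨k, rfl⟩ := ZMod.intCast_surjective h
      refine ⟨k, ?_⟩
      rw [zsmul_eq_mul, nsmul_eq_mul]
      push_cast
      ring
    · rintro ⟨k, rfl⟩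
      refine ⟨((k : ℤ) : ZMod q), ?_⟩
      rw [zsmul_eq_mul, nsmul_eq_mul]
      push_cast
      ring
  rw [h, Nat.card_zmultiples, ZMod.addOrderOf_coe d hq]

lemma card_zmod_hom_mul (d q : ℕ) (hd : d ≠ 0) (hq : q ≠ 0) :
    Nat.card (ZMod d →+ ZMod q) * Nat.card (nsmulSub q (ZMod d)) = d := by
  haveI : NeZero q := ⟨hq⟩
  have h1 : Nat.card {a : ZMod q // d • a = 0} * Nat.card (nsmulSub d (ZMod q)) = q := by
    rw [card_smulKer_mul d (ZMod q), Nat.card_zmod]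
  have hg : q.gcd d ∣ q := Nat.gcd_dvd_left q d
  have hK : Nat.card {a : ZMod q // d • a = 0} = q.gcd d := by
    rw [card_nsmulSub_zmod d q hq] at h1
    have hd1 : q / q.gcd d ≠ 0 :=
      Nat.div_ne_zero_iff_of_dvd hg |>.mpr ⟨hq, Nat.gcd_ne_zero_left hq⟩
    have : q.gcd d * (q / q.gcd d) = q := Nat.mul_div_cancel' hg
    exact Nat.eq_of_mul_eq_mul_right (Nat.pos_of_ne_zero hd1) (h1.trans this.symm)
  rw [card_zmodHom, hK, card_nsmulSub_zmod q d hd, Nat.gcd_comm q d]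
  exact Nat.mul_div_cancel' (Nat.gcd_dvd_left d q)


def dfinsuppPi {ι : Type*} [Fintype ι] (β : ι → Type*) [∀ i, AddCommMonoid (β i)] :
    (Π₀ i, β i) ≃+ ∀ i, β i :=
  { DFinsupp.equivFunOnFintype with map_add' := fun a b => DFinsupp.coe_add a b }

lemma card_nsmulSub_pi {ι : Type*} [Fintype ι] (M : ι → Type*) [∀ i, AddCommGroup (M i)] (q : ℕ) :
    Nat.card (nsmulSub q (∀ i, M i)) = ∏ i, Nat.card (nsmulSub q (M i)) := by
  rw [← Nat.card_pi]
  refine Nat.card_congr ((Equiv.subtypeEquivRight fun x => ?_).trans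
    (Equiv.subtypePiEquivPi (p := fun i y => y ∈ nsmulSub q (M i))))
  constructor
  · intro hx i
    obtain ⟨h, rfl⟩ := mem_nsmulSub.mp hx
    exact mem_nsmulSub.mpr ⟨h i, rfl⟩
  · intro hx
    choose h hh using fun i => mem_nsmulSub.mp (hx i)
    exact mem_nsmulSub.mpr ⟨h, funext fun i => hh i⟩

set_option maxHeartbeats 1000000 in
noncomputable def torsionProdEquiv (n : ℕ) (D : Type*) [AddCommGroup D] [Finite D] :
    AddCommGroup.torsion ((Fin n →₀ ℤ) × D) ≃+ D where
  toFun x := (x : (Fin n →₀ ℤ) × D).2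
  invFun d := ⟨(0, d), by
    show IsOfFinAddOrder _
    rw [isOfFinAddOrder_iff_nsmul_eq_zero]
    exact ⟨addOrderOf d, addOrderOf_pos d, by
      rw [Prod.smul_mk, smul_zero, addOrderOf_nsmul_eq_zero, Prod.mk_eq_zero]
      exact ⟨rfl, rfl⟩⟩⟩
  left_inv := by
    rintro ⟨⟨a, d⟩, hx⟩
    have ha : IsOfFinAddOrder a := (AddMonoidHom.fst _ _).isOfFinAddOrder hx
    obtain ⟨k, hk, hka⟩ := isOfFinAddOrder_iff_nsmul_eq_zero.mp ha
    have ha0 : a = 0 := by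
      ext j
      have h := DFunLike.congr_fun hka j
      rw [Finsupp.smul_apply] at h
      simpa using (by
        have : (k : ℤ) * a j = 0 := by rw [← nsmul_eq_mul]; exact_mod_cast h
        rcases mul_eq_zero.mp this with h' | h'
        · exact absurd (by exact_mod_cast h' : k = 0) (by omega)
        · exact h')
    ext : 1
    simp [ha0]
  right_inv d := rfl
  map_add' x y := rfl

lemma card_hom_mul_finite (D : Type*) [AddCommGroup D] [Finite D] (q : ℕ) (hq : q ≠ 0) :
    Nat.card (D →+ ZMod q) * Nat.card (nsmulSub q D) = Nat.card D := by
  classical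
  obtain ⟨ι, hι, p, hp, e, ⟨f⟩⟩ := AddCommGroup.equiv_directSum_zmod_of_finite D
  haveI : ∀ i, NeZero (p i ^ e i) := fun i => ⟨pow_ne_zero _ (hp i).pos.ne'⟩
  let f2 : D ≃+ ∀ i, ZMod (p i ^ e i) :=
    f.trans (dfinsuppPi (fun i => ZMod (p i ^ e i)) :
      (⨁ i, ZMod (p i ^ e i)) ≃+ ∀ i, ZMod (p i ^ e i))
  have h1 : Nat.card (D →+ ZMod q) = ∏ i, Nat.card (ZMod (p i ^ e i) →+ ZMod q) := by
    rw [Nat.card_congr (homCongr f2 (ZMod q)),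
      Nat.card_congr (homPiEquiv ι _ (ZMod q)), Nat.card_pi]
  have h2 : Nat.card (nsmulSub q D) = ∏ i, Nat.card (nsmulSub q (ZMod (p i ^ e i))) := by
    rw [card_nsmulSub_congr q f2, card_nsmulSub_pi]
  have h3 : Nat.card D = ∏ i, (p i ^ e i) := by
    rw [Nat.card_congr f2.toEquiv, Nat.card_pi]
    exact Finset.prod_congr rfl fun i _ => Nat.card_zmod _
  rw [h1, h2, h3, ← Finset.prod_mul_distrib]
  exact Finset.prod_congr rfl fun i _ => card_zmod_hom_mul _ q (NeZero.ne _) hq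

lemma card_hom_fg_rat (Q : Type*) [AddCommGroup Q] [AddGroup.FG Q] (q : ℕ) (hq : q ≠ 0) :
    (Nat.card (Q →+ ZMod q) : ℚ) =
      (q : ℚ) ^ Module.finrank ℤ Q *
        ((Nat.card (AddCommGroup.torsion Q) : ℚ) /
          (Nat.card (nsmulSub q (AddCommGroup.torsion Q)) : ℚ)) := by
  classical
  obtain ⟨n, ι, fι, p, hp, e, ⟨f⟩⟩ := AddCommGroup.equiv_free_prod_directSum_zmod Q
  haveI : ∀ i, NeZero (p i ^ e i) := fun i => ⟨pow_ne_zero _ (hp i).pos.ne'⟩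
  set D := (⨁ i, ZMod (p i ^ e i)) with hD
  haveI : Finite D :=
    Finite.of_equiv _ ((dfinsuppPi (fun i => ZMod (p i ^ e i)) :
      D ≃+ ∀ i, ZMod (p i ^ e i))).symm.toEquiv
  let t : AddCommGroup.torsion Q ≃+ D := (torsionCongr f).trans (torsionProdEquiv n D)
  haveI : Module.Finite ℤ D := Module.Finite.of_finite
  have hrkD : Module.finrank ℤ D = 0 := by
    rw [Module.finrank_eq_zero_iff]
    intro x
    exact ⟨addOrderOf x, by exact_mod_cast (addOrderOf_pos x).ne',
      by rw [natCast_zsmul, addOrderOf_nsmul_eq_zero]⟩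
  have hrk : Module.finrank ℤ Q = n := by
    have hq2 := Submodule.finrank_quotient_add_finrank (R := ℤ)
      (LinearMap.ker (LinearMap.fst ℤ (Fin n →₀ ℤ) D))
    rw [(LinearMap.quotKerEquivOfSurjective _ LinearMap.fst_surjective).finrank_eq] at hq2
    have hker : Module.finrank ℤ (LinearMap.ker (LinearMap.fst ℤ (Fin n →₀ ℤ) D)) = 0 := by
      rw [LinearMap.ker_fst,
        ← (LinearEquiv.ofInjective (LinearMap.inr ℤ (Fin n →₀ ℤ) D)
            LinearMap.inr_injective).finrank_eq]
      exact hrkD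
    rw [f.toIntLinearEquiv.finrank_eq]
    rw [hker, add_zero, Module.finrank_finsupp_self, Fintype.card_fin] at hq2
    exact hq2.symm
  have h1 : Nat.card (Q →+ ZMod q) = q ^ n * Nat.card (D →+ ZMod q) := by
    rw [Nat.card_congr (homCongr f (ZMod q)), Nat.card_congr (homProdEquiv _ _ _),
      Nat.card_prod]
    congr 1
    rw [Nat.card_congr (Finsupp.liftAddHom (α := Fin n) (M := ℤ) (N := ZMod q)).symm.toEquiv,
      Nat.card_pi]
    have : Nat.card (ℤ →+ ZMod q) = q := by
      rw [← Nat.card_congr (zmultiplesHom (ZMod q)), Nat.card_zmod]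
    simp [this]
  have h3 : Nat.card (AddCommGroup.torsion Q) = Nat.card D := Nat.card_congr t.toEquiv
  have h4 : Nat.card (nsmulSub q (AddCommGroup.torsion Q)) = Nat.card (nsmulSub q D) :=
    card_nsmulSub_congr q t
  have h5 : (Nat.card (nsmulSub q D) : ℚ) ≠ 0 := by
    have : Nat.card (nsmulSub q D) ≠ 0 := Nat.card_ne_zero.mpr ⟨⟨0, zero_mem _⟩, inferInstance⟩
    exact_mod_cast this
  have h2 : (Nat.card (D →+ ZMod q) : ℚ) * (Nat.card (nsmulSub q D) : ℚ) = Nat.card D := by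
    exact_mod_cast congrArg (fun x : ℕ => (x : ℚ)) (card_hom_mul_finite D q hq)
  rw [h1, hrk, h3, h4]
  push_cast
  congr 1
  rw [eq_div_iff h5]
  exact h2

lemma finrank_quotient_add (N : AddSubgroup G) [AddGroup.FG G] :
    Module.finrank ℤ (G ⧸ N) + Module.finrank ℤ N = Module.finrank ℤ G := by
  haveI : Module.Finite ℤ G := Module.Finite.iff_addGroup_fg.mpr ‹_›
  have h := Submodule.finrank_quotient_add_finrank (R := ℤ) (M := G) (AddSubgroup.toIntSubmodule N)
  have e1 : Module.finrank ℤ (G ⧸ AddSubgroup.toIntSubmodule N) = Module.finrank ℤ (G ⧸ N) :=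
    (AddEquiv.refl _ : (G ⧸ AddSubgroup.toIntSubmodule N) ≃+ (G ⧸ N)).toIntLinearEquiv.finrank_eq
  have e2 : Module.finrank ℤ (AddSubgroup.toIntSubmodule N) = Module.finrank ℤ N :=
    (AddEquiv.refl _ : (AddSubgroup.toIntSubmodule N) ≃+ N).toIntLinearEquiv.finrank_eq
  rw [e1, e2] at h
  exact h

def vanishEquiv (g : α → G) (A : Finset α) (H : Type*) [AddCommGroup H] :
    {φ : G →+ H // ∀ e ∈ A, φ (g e) = 0} ≃ ((G ⧸ listSub g A) →+ H) where
  toFun φ := QuotientAddGroup.lift _ φ.1 (by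
    intro x hx
    have hle : listSub g A ≤ φ.1.ker := (AddSubgroup.closure_le _).mpr (by
      rintro _ ⟨e', he', rfl⟩
      exact AddMonoidHom.mem_ker.mpr (φ.2 e' (by simpa using he')))
    exact AddMonoidHom.mem_ker.mp (hle hx))
  invFun ψ := ⟨ψ.comp (QuotientAddGroup.mk' _), fun e he => by
    have h0 : (QuotientAddGroup.mk' (listSub g A)) (g e) = 0 :=
      (QuotientAddGroup.eq_zero_iff _).mpr
        (AddSubgroup.subset_closure ⟨e, by simpa using he, rfl⟩)
    show ψ ((QuotientAddGroup.mk' (listSub g A)) (g e)) = 0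
    rw [h0, map_zero]⟩
  left_inv φ := by
    refine Subtype.ext (AddMonoidHom.ext fun x => ?_)
    simp
    rfl
  right_inv ψ := by
    refine AddMonoidHom.ext fun y => ?_
    refine QuotientAddGroup.induction_on y fun z => ?_
    simp
    rfl

end AuxiliaryLemmas

/-- generalized Fortuin–Kasteleyn representation: for a finite list
`(g_e)_{e∈E}` in a finitely generated abelian group `G` and a finite abelian group
`H = ⊕_{i=1}^k ℤ/q_iℤ` of order `q = q_1⋯q_k`,
`Σ_{φ∈Hom(G,H)} Π_{e∈E}(1 + v_e·[φ(g_e)=0])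
  = q^{rk(G)} Σ_{A⊆E} q^{-rk(A)} (Π_i m(A)/|q_i G_A|) Π_{e∈A} v_e`. -/
theorem generalized_fortuin_kasteleyn [Fintype α] [AddGroup.FG G]
    (g : α → G) (k : ℕ) (qs : Fin k → ℕ) (hqs : ∀ i, 0 < qs i)
    [Fintype (G →+ (∀ i, ZMod (qs i)))]
    (v : α → ℚ) :
    ∑ φ : G →+ (∀ i, ZMod (qs i)),
        ∏ e : α, (1 + v e * (if φ (g e) = 0 then 1 else 0)) =
      ((∏ i, qs i : ℕ) : ℚ) ^ (Module.finrank ℤ G) *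
        ∑ A : Finset α,
          ((∏ i, qs i : ℕ) : ℚ) ^ (-(listRk g A : ℤ)) *
            (∏ i, (listMult g A : ℚ) /
              (Nat.card (nsmulSub (qs i) (listTorsion g A)) : ℚ)) *
            ∏ e ∈ A, v e := by
  have hQn : ((∏ i, qs i : ℕ) : ℚ) ≠ 0 := by
    rw [Nat.cast_ne_zero]
    exact Finset.prod_ne_zero_iff.mpr fun i _ => (hqs i).ne'
  -- Step 1: expand the product
  have expand : ∀ φ : G →+ (∀ i, ZMod (qs i)),
      ∏ e : α, (1 + v e * (if φ (g e) = 0 then 1 else 0)) =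
        ∑ A : Finset α, (if ∀ e ∈ A, φ (g e) = 0 then (1 : ℚ) else 0) * ∏ e ∈ A, v e := by
    intro φ
    rw [Finset.prod_congr rfl fun e _ =>
      add_comm (1 : ℚ) (v e * (if φ (g e) = 0 then 1 else 0)), Finset.prod_add]
    rw [← Finset.powerset_univ]
    refine Finset.sum_congr rfl fun A _ => ?_
    rw [Finset.prod_const_one, mul_one, Finset.prod_mul_distrib, Finset.prod_boole, mul_comm]
    by_cases hP : ∀ e ∈ A, φ (g e) = 0 <;> simp [hP]
  rw [Finset.sum_congr rfl fun φ _ => expand φ, Finset.sum_comm]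
  -- Step 2: count
  have count : ∀ A : Finset α,
      (∑ φ : G →+ (∀ i, ZMod (qs i)), (if ∀ e ∈ A, φ (g e) = 0 then (1 : ℚ) else 0)) =
        (Nat.card {φ : G →+ (∀ i, ZMod (qs i)) // ∀ e ∈ A, φ (g e) = 0} : ℚ) := by
    intro A
    rw [Finset.sum_boole, Nat.card_eq_fintype_card, Fintype.card_subtype]
  rw [Finset.mul_sum]
  refine Finset.sum_congr rfl fun A _ => ?_
  rw [← Finset.sum_mul, count A]
  -- Step 3: compute the card
  have hcard : (Nat.card {φ : G →+ (∀ i, ZMod (qs i)) // ∀ e ∈ A, φ (g e) = 0} : ℚ) =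
      ∏ i, (Nat.card ((G ⧸ listSub g A) →+ ZMod (qs i)) : ℚ) := by
    rw [Nat.card_congr (vanishEquiv g A _),
      Nat.card_congr (homIntoPiEquiv (G ⧸ listSub g A) (Fin k) fun i => ZMod (qs i)),
      Nat.card_pi]
    push_cast
    congr 1
  have hval : ∀ i : Fin k, (Nat.card ((G ⧸ listSub g A) →+ ZMod (qs i)) : ℚ) =
      (qs i : ℚ) ^ Module.finrank ℤ (G ⧸ listSub g A) *
        ((listMult g A : ℚ) / (Nat.card (nsmulSub (qs i) (listTorsion g A)) : ℚ)) := by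
    intro i
    rw [card_hom_fg_rat (G ⧸ listSub g A) (qs i) (hqs i).ne']
    congr 1
  have hz : ((∏ i, qs i : ℕ) : ℚ) ^ (Module.finrank ℤ (G ⧸ listSub g A)) =
      ((∏ i, qs i : ℕ) : ℚ) ^ (Module.finrank ℤ G) *
        ((∏ i, qs i : ℕ) : ℚ) ^ (-(listRk g A : ℤ)) := by
    rw [← zpow_natCast (((∏ i, qs i : ℕ) : ℚ)) (Module.finrank ℤ (G ⧸ listSub g A)),
      ← zpow_natCast (((∏ i, qs i : ℕ) : ℚ)) (Module.finrank ℤ G), ← zpow_add₀ hQn]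
    congr 1
    have h := finrank_quotient_add (listSub g A)
    simp only [listRk]
    omega
  rw [hcard, Finset.prod_congr rfl fun i _ => hval i, Finset.prod_mul_distrib,
    Finset.prod_pow, ← Nat.cast_prod, hz]
  ring
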